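/- With V, λᵢ as above and Z₃ = I_N ⊗ I_2 ⊗ I_n ⊗ 1_{N₁}, the trace of V⁻¹ Z₃ Z₃ᵀ equals (1/λ₁)·N·2(n−1)·N₁ + (1/λ₂)·N·N₁ + (1/λ₃)·N·N₁. -/
import Mathlib

open Matrix
open scoped Kronecker

noncomputable def Jmat (a : ℕ) : Matrix (Fin a) (Fin a) ℝ := fun _ _ => 1
noncomputable def onesCol (a : ℕ) : Matrix (Fin a) (Fin 1) ℝ := fun _ _ => 1

lemma Jmat_mul_Jmat (a : ℕ) : Jmat a * Jmat a = (a : ℝ) • Jmat a := by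
  ext i j
  simp [Jmat, Matrix.mul_apply, Finset.sum_const, Finset.card_univ]

lemma onesCol_mul_t (a : ℕ) : onesCol a * (onesCol a)ᵀ = Jmat a := by
  ext i j
  simp [onesCol, Jmat, Matrix.mul_apply]

lemma trace_Jmat (a : ℕ) : (Jmat a).trace = a := by
  simp [Jmat, Matrix.trace, Matrix.diag]

noncomputable def K1 (N n N₁ : ℕ) :
    Matrix (((Fin N × Fin 2) × Fin n) × Fin N₁) (((Fin N × Fin 2) × Fin n) × Fin N₁) ℝ :=
  (((1 : Matrix (Fin N) (Fin N) ℝ) ⊗ₖ (1 : Matrix (Fin 2) (Fin 2) ℝ)) ⊗ₖ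
      (1 : Matrix (Fin n) (Fin n) ℝ)) ⊗ₖ Jmat N₁

noncomputable def K2 (N n N₁ : ℕ) :
    Matrix (((Fin N × Fin 2) × Fin n) × Fin N₁) (((Fin N × Fin 2) × Fin n) × Fin N₁) ℝ :=
  (((1 : Matrix (Fin N) (Fin N) ℝ) ⊗ₖ (1 : Matrix (Fin 2) (Fin 2) ℝ)) ⊗ₖ Jmat n) ⊗ₖ Jmat N₁

noncomputable def K3 (N n N₁ : ℕ) :
    Matrix (((Fin N × Fin 2) × Fin n) × Fin N₁) (((Fin N × Fin 2) × Fin n) × Fin N₁) ℝ :=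
  (((1 : Matrix (Fin N) (Fin N) ℝ) ⊗ₖ Jmat 2) ⊗ₖ Jmat n) ⊗ₖ Jmat N₁

lemma K1_mul_K1 (N n N₁ : ℕ) : K1 N n N₁ * K1 N n N₁ = (N₁ : ℝ) • K1 N n N₁ := by
  simp only [K1, ← Matrix.mul_kronecker_mul, Jmat_mul_Jmat, one_mul,
    Matrix.kronecker_smul]

lemma K1_mul_K2 (N n N₁ : ℕ) : K1 N n N₁ * K2 N n N₁ = (N₁ : ℝ) • K2 N n N₁ := by
  simp only [K1, K2, ← Matrix.mul_kronecker_mul, Jmat_mul_Jmat, one_mul,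
    Matrix.kronecker_smul]

lemma K2_mul_K1 (N n N₁ : ℕ) : K2 N n N₁ * K1 N n N₁ = (N₁ : ℝ) • K2 N n N₁ := by
  simp only [K1, K2, ← Matrix.mul_kronecker_mul, Jmat_mul_Jmat, one_mul, mul_one,
    Matrix.kronecker_smul]

lemma K1_mul_K3 (N n N₁ : ℕ) : K1 N n N₁ * K3 N n N₁ = (N₁ : ℝ) • K3 N n N₁ := by
  simp only [K1, K3, ← Matrix.mul_kronecker_mul, Jmat_mul_Jmat, one_mul,
    Matrix.kronecker_smul]

lemma K3_mul_K1 (N n N₁ : ℕ) : K3 N n N₁ * K1 N n N₁ = (N₁ : ℝ) • K3 N n N₁ := by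
  simp only [K1, K3, ← Matrix.mul_kronecker_mul, Jmat_mul_Jmat, one_mul, mul_one,
    Matrix.kronecker_smul]

lemma K2_mul_K2 (N n N₁ : ℕ) :
    K2 N n N₁ * K2 N n N₁ = ((n : ℝ) * N₁) • K2 N n N₁ := by
  simp only [K2, ← Matrix.mul_kronecker_mul, Jmat_mul_Jmat, one_mul,
    Matrix.kronecker_smul, Matrix.smul_kronecker, smul_smul, mul_comm]

lemma K2_mul_K3 (N n N₁ : ℕ) :
    K2 N n N₁ * K3 N n N₁ = ((n : ℝ) * N₁) • K3 N n N₁ := by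
  simp only [K2, K3, ← Matrix.mul_kronecker_mul, Jmat_mul_Jmat, one_mul, mul_one,
    Matrix.kronecker_smul, Matrix.smul_kronecker, smul_smul, mul_comm]

lemma K3_mul_K2 (N n N₁ : ℕ) :
    K3 N n N₁ * K2 N n N₁ = ((n : ℝ) * N₁) • K3 N n N₁ := by
  simp only [K2, K3, ← Matrix.mul_kronecker_mul, Jmat_mul_Jmat, one_mul, mul_one,
    Matrix.kronecker_smul, Matrix.smul_kronecker, smul_smul, mul_comm]

lemma K3_mul_K3 (N n N₁ : ℕ) :
    K3 N n N₁ * K3 N n N₁ = (2 * (n : ℝ) * N₁) • K3 N n N₁ := by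
  have h2 : Jmat 2 * Jmat 2 = (2 : ℝ) • Jmat 2 := by
    simpa using Jmat_mul_Jmat 2
  simp only [K3, ← Matrix.mul_kronecker_mul, Jmat_mul_Jmat, h2, one_mul,
    Matrix.kronecker_smul, Matrix.smul_kronecker, smul_smul, mul_comm]

lemma trace_K1 (N n N₁ : ℕ) : (K1 N n N₁).trace = (N : ℝ) * 2 * n * N₁ := by
  simp [K1, Matrix.trace_kronecker, trace_Jmat, Matrix.trace_one]

lemma trace_K2 (N n N₁ : ℕ) : (K2 N n N₁).trace = (N : ℝ) * 2 * n * N₁ := by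
  simp [K2, Matrix.trace_kronecker, trace_Jmat, Matrix.trace_one]

lemma trace_K3 (N n N₁ : ℕ) : (K3 N n N₁).trace = (N : ℝ) * 2 * n * N₁ := by
  simp [K3, Matrix.trace_kronecker, trace_Jmat, Matrix.trace_one]
noncomputable def Vmat (N n N₁ : ℕ) (σe2 σ12 σ22 σ32 : ℝ) :
    Matrix (((Fin N × Fin 2) × Fin n) × Fin N₁) (((Fin N × Fin 2) × Fin n) × Fin N₁) ℝ :=
  σe2 • ((((1 : Matrix (Fin N) (Fin N) ℝ) ⊗ₖ (1 : Matrix (Fin 2) (Fin 2) ℝ)) ⊗ₖ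
            (1 : Matrix (Fin n) (Fin n) ℝ)) ⊗ₖ (1 : Matrix (Fin N₁) (Fin N₁) ℝ))
  + σ32 • ((((1 : Matrix (Fin N) (Fin N) ℝ) ⊗ₖ Jmat 2) ⊗ₖ Jmat n) ⊗ₖ Jmat N₁)
  + σ22 • ((((1 : Matrix (Fin N) (Fin N) ℝ) ⊗ₖ (1 : Matrix (Fin 2) (Fin 2) ℝ)) ⊗ₖ
            Jmat n) ⊗ₖ Jmat N₁)
  + σ12 • ((((1 : Matrix (Fin N) (Fin N) ℝ) ⊗ₖ (1 : Matrix (Fin 2) (Fin 2) ℝ)) ⊗ₖ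
            (1 : Matrix (Fin n) (Fin n) ℝ)) ⊗ₖ Jmat N₁)

/-- The design matrix `Z₃ = I_N ⊗ I_2 ⊗ I_n ⊗ 1_{N₁}`. -/
noncomputable def Z3 (N n N₁ : ℕ) :
    Matrix (((Fin N × Fin 2) × Fin n) × Fin N₁) (((Fin N × Fin 2) × Fin n) × Fin 1) ℝ :=
  (((1 : Matrix (Fin N) (Fin N) ℝ) ⊗ₖ (1 : Matrix (Fin 2) (Fin 2) ℝ)) ⊗ₖ
      (1 : Matrix (Fin n) (Fin n) ℝ)) ⊗ₖ onesCol N₁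

/-- `tr(V⁻¹ Z₃ Z₃ᵀ) = (1/λ₁)·N·2(n−1)·N₁ + (1/λ₂)·N·N₁ + (1/λ₃)·N·N₁`. -/
theorem trace_Vinv_Z3 (N n N₁ : ℕ) (hN : 0 < N) (hn : 0 < n) (hN₁ : 0 < N₁)
    (σe2 σ12 σ22 σ32 : ℝ) (hσe : 0 < σe2) (h1 : 0 ≤ σ12) (h2 : 0 ≤ σ22) (h3 : 0 ≤ σ32)
    (l1 l2 l3 : ℝ) (hl1 : l1 = σe2 + N₁ * σ12)
    (hl2 : l2 = σe2 + N₁ * σ12 + n * N₁ * σ22)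
    (hl3 : l3 = σe2 + N₁ * σ12 + n * N₁ * σ22 + 2 * n * N₁ * σ32) :
    ((Vmat N n N₁ σe2 σ12 σ22 σ32)⁻¹ * (Z3 N n N₁ * (Z3 N n N₁)ᵀ)).trace =
      (1 / l1) * N * (2 * ((n : ℝ) - 1)) * N₁ + (1 / l2) * N * N₁ + (1 / l3) * N * N₁ := by
  have hn' : (0:ℝ) < n := by exact_mod_cast hn
  have hN₁' : (0:ℝ) < N₁ := by exact_mod_cast hN₁
  have hb1 : (0:ℝ) ≤ (N₁:ℝ) * σ12 := mul_nonneg hN₁'.le h1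
  have hb2 : (0:ℝ) ≤ (n:ℝ) * N₁ * σ22 := mul_nonneg (mul_nonneg hn'.le hN₁'.le) h2
  have hb3 : (0:ℝ) ≤ 2 * (n:ℝ) * N₁ * σ32 := by positivity
  have hl1p : 0 < l1 := by rw [hl1]; linarith
  have hl2p : 0 < l2 := by rw [hl2]; linarith
  have hl3p : 0 < l3 := by rw [hl3]; linarith
  subst hl1 hl2 hl3
  set w0 : ℝ := σe2⁻¹ with hw0
  set w1 : ℝ := ((σe2 + N₁ * σ12)⁻¹ - σe2⁻¹) / N₁ with hw1
  set w2 : ℝ := ((σe2 + N₁ * σ12 + n * N₁ * σ22)⁻¹ - (σe2 + N₁ * σ12)⁻¹) / (n * N₁) with hw2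
  set w3 : ℝ := ((σe2 + N₁ * σ12 + n * N₁ * σ22 + 2 * n * N₁ * σ32)⁻¹
      - (σe2 + N₁ * σ12 + n * N₁ * σ22)⁻¹) / (2 * n * N₁) with hw3
  set W : Matrix (((Fin N × Fin 2) × Fin n) × Fin N₁) (((Fin N × Fin 2) × Fin n) × Fin N₁) ℝ :=
    w0 • (1 : Matrix _ _ ℝ) + w1 • K1 N n N₁ + w2 • K2 N n N₁ + w3 • K3 N n N₁ with hWdef
  have hV : Vmat N n N₁ σe2 σ12 σ22 σ32 =
      σe2 • (1 : Matrix _ _ ℝ) + σ32 • K3 N n N₁ + σ22 • K2 N n N₁ + σ12 • K1 N n N₁ := by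
    simp [Vmat, K1, K2, K3, Matrix.one_kronecker_one]
  have hVW : Vmat N n N₁ σe2 σ12 σ22 σ32 * W = 1 := by
    rw [hV, hWdef]
    simp only [Matrix.add_mul, Matrix.mul_add, smul_mul_assoc, mul_smul_comm,
      K1_mul_K1, K1_mul_K2, K2_mul_K1, K1_mul_K3, K3_mul_K1, K2_mul_K2, K2_mul_K3,
      K3_mul_K2, K3_mul_K3, Matrix.one_mul, Matrix.mul_one, smul_smul]
    match_scalars <;>
      · simp only [hw0, hw1, hw2, hw3]
        field_simp
        try ring
  have hZ : Z3 N n N₁ * (Z3 N n N₁)ᵀ = K1 N n N₁ := by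
    simp only [Z3, K1, ← Matrix.kroneckerMap_transpose, Matrix.transpose_one,
      ← Matrix.mul_kronecker_mul, onesCol_mul_t, Matrix.one_mul, Matrix.mul_one]
  rw [Matrix.inv_eq_right_inv hVW, hZ, hWdef]
  simp only [Matrix.add_mul, smul_mul_assoc, K1_mul_K1, K2_mul_K1, K3_mul_K1,
    Matrix.one_mul, smul_smul, Matrix.trace_add, Matrix.trace_smul,
    trace_K1, trace_K2, trace_K3, smul_eq_mul]
  simp only [hw0, hw1, hw2, hw3]
  field_simp
  ring
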